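/- Let G₂ = ⟨a,b,c | a⁴ = b⁴ = c² = 1, [a,b]=1, [c,a]=a², [c,b]=b²⟩. The only abelian normal subgroup of G₂ of order 16 is ⟨a,b⟩ ≅ ℤ₄ × ℤ₄. -/

import Mathlib

open Subgroup

private def zmodPowHom {G : Type*} [Group G] (n : ℕ) [NeZero n] (x : G) (hx : x ^ n = 1) :
    Multiplicative (ZMod n) →* G :=
  MonoidHom.mk' (fun k => x ^ (Multiplicative.toAdd k).val) (by
    intro i j
    have key : ∀ m : ℕ, x ^ (m % n) = x ^ m := by
      intro m
      conv_rhs => rw [← Nat.div_add_mod m n]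
      rw [pow_add, pow_mul, hx, one_pow, one_mul]
    show x ^ (Multiplicative.toAdd i + Multiplicative.toAdd j).val = _
    rw [ZMod.val_add, key, pow_add])

theorem stmt17 (G : Type*) [Group G] (a b c : G)
    (ha : a ^ 4 = 1) (hb : b ^ 4 = 1) (hc : c ^ 2 = 1)
    (hab : a * b = b * a)
    (hca : c⁻¹ * a⁻¹ * c * a = a ^ 2) (hcb : c⁻¹ * b⁻¹ * c * b = b ^ 2)
    (hgen : Subgroup.closure {a, b, c} = ⊤) (hcard : Nat.card G = 32) :
    (∀ H : Subgroup G,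
      (H.Normal ∧ (∀ x y : H, x * y = y * x) ∧ Nat.card H = 16) ↔
        H = Subgroup.closure {a, b}) ∧
    Nonempty (Subgroup.closure {a, b} ≃*
      (Multiplicative (ZMod 4) × Multiplicative (ZMod 4))) := by
  have hfin : Finite G := Nat.finite_of_card_ne_zero (by omega)
  set A := Subgroup.closure ({a, b} : Set G) with hA
  have haA : a ∈ A := subset_closure (by simp)
  have hbA : b ∈ A := subset_closure (by simp)
  -- commutativity of A
  have hcommA : ∀ x ∈ A, ∀ y ∈ A, Commute x y := by
    intro x hx y hy
    induction hx, hy using closure_induction₂ with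
    | mem u v hu hv =>
      simp only [Set.mem_insert_iff, Set.mem_singleton_iff] at hu hv
      rcases hu with h | h <;> rcases hv with h' | h' <;> simp only [h, h']
      exacts [Commute.refl _, hab, (show Commute a b from hab).symm, Commute.refl _]
    | one_left x hx => exact Commute.one_left x
    | one_right x hx => exact Commute.one_right x
    | mul_left x y z hx hy hz h1 h2 => exact h1.mul_left h2
    | mul_right y z x hy hz hx h1 h2 => exact h1.mul_right h2
    | inv_left x y hx hy h => exact h.inv_left
    | inv_right x y hx hy h => exact h.inv_right
  have hcc : c * c = 1 := by rw [← pow_two]; exact hc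
  have hcinv : c⁻¹ = c := inv_eq_of_mul_eq_one_right hcc
  have hconj_a : c⁻¹ * a * c = a⁻¹ := by
    have h1 : c⁻¹ * a⁻¹ * c = a := by
      calc c⁻¹ * a⁻¹ * c = (c⁻¹ * a⁻¹ * c * a) * a⁻¹ := by group
        _ = a ^ 2 * a⁻¹ := by rw [hca]
        _ = a := by group
    calc c⁻¹ * a * c = (c⁻¹ * a⁻¹ * c)⁻¹ := by group
      _ = a⁻¹ := by rw [h1]
  have hconj_b : c⁻¹ * b * c = b⁻¹ := by
    have h1 : c⁻¹ * b⁻¹ * c = b := by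
      calc c⁻¹ * b⁻¹ * c = (c⁻¹ * b⁻¹ * c * b) * b⁻¹ := by group
        _ = b ^ 2 * b⁻¹ := by rw [hcb]
        _ = b := by group
    calc c⁻¹ * b * c = (c⁻¹ * b⁻¹ * c)⁻¹ := by group
      _ = b⁻¹ := by rw [h1]
  -- conjugation by c inverts A
  have hconjA : ∀ y ∈ A, c⁻¹ * y * c = y⁻¹ := by
    intro y hy
    induction hy using closure_induction with
    | mem u hu =>
      simp only [Set.mem_insert_iff, Set.mem_singleton_iff] at hu
      rcases hu with h | h <;> rw [h]
      exacts [hconj_a, hconj_b]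
    | one => group
    | mul x y hx hy h1 h2 =>
      have hxy := hcommA x hx y hy
      calc c⁻¹ * (x * y) * c = (c⁻¹ * x * c) * (c⁻¹ * y * c) := by group
        _ = x⁻¹ * y⁻¹ := by rw [h1, h2]
        _ = (x * y)⁻¹ := by rw [mul_inv_rev]; exact hxy.inv_inv.eq
    | inv x hx h =>
      calc c⁻¹ * x⁻¹ * c = (c⁻¹ * x * c)⁻¹ := by group
        _ = x⁻¹⁻¹ := by rw [h]
  -- A is normal
  have hc_norm : ∀ h : G, h ∈ A ↔ c * h * c⁻¹ ∈ A := by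
    intro h
    constructor
    · intro hh
      have e1 : c * h * c⁻¹ = c⁻¹ * h * c := by rw [hcinv]
      rw [e1, hconjA h hh]
      exact inv_mem hh
    · intro hh
      have h2 := hconjA _ hh
      have h3 : c⁻¹ * (c * h * c⁻¹) * c = h := by group
      have h4 : h = (c * h * c⁻¹)⁻¹ := h3.symm.trans h2
      rw [h4]
      exact inv_mem hh
  have hnormal : A.Normal := by
    have htop : (⊤ : Subgroup G) ≤ Subgroup.normalizer (A : Set G) := by
      rw [← hgen]
      refine (closure_le _).mpr ?_
      intro x hx
      simp only [Set.mem_insert_iff, Set.mem_singleton_iff] at hx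
      rcases hx with h | h | h <;> rw [h]
      · exact Subgroup.le_normalizer haA
      · exact Subgroup.le_normalizer hbA
      · exact Subgroup.mem_normalizer_iff.mpr hc_norm
    exact Subgroup.normalizer_eq_top_iff.mp (top_le_iff.mp htop)
  haveI := hnormal
  -- index of A divides 2
  have hidx_dvd : A.index ∣ 2 := by
    have hsurj : Function.Surjective (QuotientGroup.mk' A) := QuotientGroup.mk'_surjective A
    have h1 : Subgroup.closure ((QuotientGroup.mk' A) '' {a, b, c}) = ⊤ := by
      rw [← MonoidHom.map_closure, hgen]
      exact Subgroup.map_top_of_surjective _ hsurj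
    have h2 : (⊤ : Subgroup (G ⧸ A)) ≤ Subgroup.zpowers ((QuotientGroup.mk' A) c) := by
      rw [← h1]
      refine (closure_le _).mpr ?_
      rintro x ⟨y, hy, rfl⟩
      simp only [Set.mem_insert_iff, Set.mem_singleton_iff] at hy
      rcases hy with h | h | h <;> rw [h]
      · rw [show (QuotientGroup.mk' A) a = 1 from (QuotientGroup.eq_one_iff _).mpr haA]
        exact one_mem _
      · rw [show (QuotientGroup.mk' A) b = 1 from (QuotientGroup.eq_one_iff _).mpr hbA]
        exact one_mem _
      · exact Subgroup.mem_zpowers _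
    have h3 : Nat.card (G ⧸ A) = orderOf ((QuotientGroup.mk' A) c) := by
      rw [← Nat.card_zpowers, top_le_iff.mp h2, Subgroup.card_top]
    rw [Subgroup.index_eq_card, h3]
    exact orderOf_dvd_of_pow_eq_one (by rw [← map_pow, hc, map_one])
  -- A ≠ ⊤
  have hAne : A ≠ ⊤ := by
    intro htop
    have hcall : ∀ x y : G, Commute x y := by
      intro x y
      exact hcommA x (htop ▸ Subgroup.mem_top x) y (htop ▸ Subgroup.mem_top y)
    have ha2 : a ^ 2 = 1 := by
      have hh : a⁻¹ * c = c * a⁻¹ := ((hcall a c).inv_left).eq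
      calc a ^ 2 = c⁻¹ * a⁻¹ * c * a := hca.symm
        _ = c⁻¹ * (a⁻¹ * c) * a := by group
        _ = c⁻¹ * (c * a⁻¹) * a := by rw [hh]
        _ = 1 := by group
    have hb2 : b ^ 2 = 1 := by
      have hh : b⁻¹ * c = c * b⁻¹ := ((hcall b c).inv_left).eq
      calc b ^ 2 = c⁻¹ * b⁻¹ * c * b := hcb.symm
        _ = c⁻¹ * (b⁻¹ * c) * b := by group
        _ = c⁻¹ * (c * b⁻¹) * b := by rw [hh]
        _ = 1 := by group
    let f1 := zmodPowHom 2 a ha2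
    let f2 := zmodPowHom 2 b hb2
    let f3 := zmodPowHom 2 c hc
    have c23 : ∀ m n, Commute (f2 m) (f3 n) := fun m n => (hcall b c).pow_pow _ _
    let f23 := f2.noncommCoprod f3 c23
    have c123 : ∀ m n, Commute (f1 m) (f23 n) := by
      intro m n
      have h1 : Commute (f1 m) (f2 n.1) := (hcall a b).pow_pow _ _
      have h2 : Commute (f1 m) (f3 n.2) := (hcall a c).pow_pow _ _
      have : f23 n = f2 n.1 * f3 n.2 := rfl
      rw [this]
      exact h1.mul_right h2
    let F := f1.noncommCoprod f23 c123
    have hFsurj : Function.Surjective F := by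
      rw [← MonoidHom.range_eq_top, eq_top_iff, ← hgen]
      refine (closure_le _).mpr ?_
      intro x hx
      simp only [Set.mem_insert_iff, Set.mem_singleton_iff] at hx
      rcases hx with h | h | h <;> rw [h]
      · exact ⟨(Multiplicative.ofAdd (1 : ZMod 2), 1), by
          show a ^ (1 : ZMod 2).val * (b ^ (0 : ZMod 2).val * c ^ (0 : ZMod 2).val) = a
          norm_num [show (1 : ZMod 2).val = 1 from rfl, show (0 : ZMod 2).val = 0 from rfl]⟩
      · exact ⟨(1, (Multiplicative.ofAdd (1 : ZMod 2), 1)), by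
          show a ^ (0 : ZMod 2).val * (b ^ (1 : ZMod 2).val * c ^ (0 : ZMod 2).val) = b
          norm_num [show (1 : ZMod 2).val = 1 from rfl, show (0 : ZMod 2).val = 0 from rfl]⟩
      · exact ⟨(1, (1, Multiplicative.ofAdd (1 : ZMod 2))), by
          show a ^ (0 : ZMod 2).val * (b ^ (0 : ZMod 2).val * c ^ (1 : ZMod 2).val) = c
          norm_num [show (1 : ZMod 2).val = 1 from rfl, show (0 : ZMod 2).val = 0 from rfl]⟩
    have hle := Nat.card_le_card_of_surjective F hFsurj
    have h8 : Nat.card (Multiplicative (ZMod 2) ×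
        (Multiplicative (ZMod 2) × Multiplicative (ZMod 2))) = 8 := by
      simp [Nat.card_eq_fintype_card]
    rw [hcard, h8] at hle
    omega
  -- index and card of A
  have hmul := Subgroup.card_mul_index A
  have hidx : A.index = 2 := by
    rcases (Nat.dvd_prime Nat.prime_two).mp hidx_dvd with h1 | h2
    · exact absurd (Subgroup.index_eq_one.mp h1) hAne
    · exact h2
  have hcardA : Nat.card A = 16 := by
    rw [hcard, hidx] at hmul
    omega
  -- the isomorphism
  let f1 := zmodPowHom 4 a ha
  let f2 := zmodPowHom 4 b hb
  have ccomm : ∀ m n, Commute (f1 m) (f2 n) := fun m n =>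
    (show Commute a b from hab).pow_pow _ _
  let φ := f1.noncommCoprod f2 ccomm
  have hrangele : φ.range ≤ A := by
    rintro _ ⟨p, rfl⟩
    have : φ p = a ^ (Multiplicative.toAdd p.1).val * b ^ (Multiplicative.toAdd p.2).val := rfl
    rw [this]
    exact mul_mem (pow_mem haA _) (pow_mem hbA _)
  have hrange : φ.range = A := by
    refine le_antisymm hrangele ?_
    refine (closure_le _).mpr ?_
    intro x hx
    simp only [Set.mem_insert_iff, Set.mem_singleton_iff] at hx
    rcases hx with h | h <;> rw [h]
    · exact ⟨(Multiplicative.ofAdd (1 : ZMod 4), 1), by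
        show a ^ (1 : ZMod 4).val * b ^ (0 : ZMod 4).val = a
        norm_num [show (1 : ZMod 4).val = 1 from rfl, show (0 : ZMod 4).val = 0 from rfl]⟩
    · exact ⟨(1, Multiplicative.ofAdd (1 : ZMod 4)), by
        show a ^ (0 : ZMod 4).val * b ^ (1 : ZMod 4).val = b
        norm_num [show (1 : ZMod 4).val = 1 from rfl, show (0 : ZMod 4).val = 0 from rfl]⟩
  let φ' : Multiplicative (ZMod 4) × Multiplicative (ZMod 4) →* A :=
    φ.codRestrict A (fun p => hrangele ⟨p, rfl⟩)
  have hφ'surj : Function.Surjective φ' := by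
    rintro ⟨y, hy⟩
    rw [← hrange] at hy
    obtain ⟨p, hp⟩ := hy
    exact ⟨p, Subtype.ext hp⟩
  have hcard16 : Nat.card (Multiplicative (ZMod 4) × Multiplicative (ZMod 4)) = 16 := by
    simp [Nat.card_eq_fintype_card]
  have hbij : Function.Bijective φ' :=
    (Nat.bijective_iff_surjective_and_card φ').mpr ⟨hφ'surj, by rw [hcard16, hcardA]⟩
  let e : (Multiplicative (ZMod 4) × Multiplicative (ZMod 4)) ≃* A :=
    MulEquiv.ofBijective φ' hbij
  refine ⟨?_, ⟨e.symm⟩⟩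
  intro H
  constructor
  · rintro ⟨hN, hHcomm, hH16⟩
    haveI := hN
    have hle : H ≤ A := by
      by_contra hnle
      obtain ⟨h, hhH, hhA⟩ := SetLike.not_le_iff_exists.mp hnle
      have hcA : c ∉ A := by
        intro hcA
        apply hAne
        rw [eq_top_iff, ← hgen]
        refine (closure_le _).mpr ?_
        intro x hx
        simp only [Set.mem_insert_iff, Set.mem_singleton_iff] at hx
        rcases hx with h | h | h <;> rw [h]
        exacts [haA, hbA, hcA]
      have hxA : h * c ∈ A := by
        rw [Subgroup.mul_mem_iff_of_index_two hidx]
        exact iff_of_false hhA hcA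
      have hsq : ∀ y, y ∈ H → y ∈ A → y * y = 1 := by
        intro y hyH hyA
        have hcomm_hy : h * y = y * h := Subtype.ext_iff.mp (hHcomm ⟨h, hhH⟩ ⟨y, hyH⟩)
        have e1 : h⁻¹ * y * h = y := by
          calc h⁻¹ * y * h = h⁻¹ * (y * h) := by group
            _ = h⁻¹ * (h * y) := by rw [← hcomm_hy]
            _ = y := by group
        have hcomm_xy : (h * c) * y = y * (h * c) := hcommA (h * c) hxA y hyA
        have e2 : h⁻¹ * y * h = y⁻¹ := by
          have hh' : h = (h * c) * c⁻¹ := by group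
          have e3 : (h * c)⁻¹ * y * (h * c) = y := by
            calc (h * c)⁻¹ * y * (h * c) = (h * c)⁻¹ * (y * (h * c)) := by group
              _ = (h * c)⁻¹ * ((h * c) * y) := by rw [← hcomm_xy]
              _ = y := by group
          calc h⁻¹ * y * h = ((h * c) * c⁻¹)⁻¹ * y * ((h * c) * c⁻¹) := by rw [← hh']
            _ = c * ((h * c)⁻¹ * y * (h * c)) * c⁻¹ := by group
            _ = c * y * c⁻¹ := by rw [e3]
            _ = c⁻¹ * y * c := by rw [hcinv]
            _ = y⁻¹ := hconjA y hyA
        have hyy : y = y⁻¹ := e1.symm.trans e2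
        exact mul_eq_one_iff_eq_inv.mpr hyy
      have hrel : A.relIndex H = 2 := by
        have hdvd : A.relIndex H ∣ A.index := Subgroup.relIndex_dvd_index_of_normal ..
        rw [hidx] at hdvd
        rcases (Nat.dvd_prime Nat.prime_two).mp hdvd with h1 | h2
        · exact absurd (Subgroup.relIndex_eq_one.mp h1) hnle
        · exact h2
      have hcardsub : Nat.card (A.subgroupOf H) = 8 := by
        have hmi := Subgroup.card_mul_index (A.subgroupOf H)
        have hri : (A.subgroupOf H).index = A.relIndex H := rfl
        rw [hri, hrel, hH16] at hmi
        omega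
      have hinj : Function.Injective
          (fun y : A.subgroupOf H =>
            (⟨e.symm ⟨(y.1 : G), Subgroup.mem_subgroupOf.mp y.2⟩, by
              have h1 : ((y.1 : G)) * ((y.1 : G)) = 1 :=
                hsq _ y.1.2 (Subgroup.mem_subgroupOf.mp y.2)
              have h2 : (⟨(y.1 : G), Subgroup.mem_subgroupOf.mp y.2⟩ : A) *
                  ⟨(y.1 : G), Subgroup.mem_subgroupOf.mp y.2⟩ = 1 := Subtype.ext h1
              rw [← map_mul, h2, map_one]⟩ :
              {p : Multiplicative (ZMod 4) × Multiplicative (ZMod 4) // p * p = 1})) := by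
        intro y z hyz
        simp only [Subtype.mk.injEq] at hyz
        have h3 := e.symm.injective hyz
        have h4 := congrArg (Subtype.val) h3
        exact Subtype.ext (Subtype.ext h4)
      have hlecard := Nat.card_le_card_of_injective _ hinj
      have hT : Nat.card
          {p : Multiplicative (ZMod 4) × Multiplicative (ZMod 4) // p * p = 1} = 4 := by
        rw [Nat.card_eq_fintype_card]; decide
      rw [hcardsub, hT] at hlecard
      omega
    exact Subgroup.eq_of_le_of_card_ge hle (by rw [hcardA, hH16])
  · rintro rfl
    exact ⟨hnormal, fun x y => Subtype.ext (hcommA _ x.2 _ y.2), hcardA⟩
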